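/- arXiv:1901.01356 — 2 statements merged into one kernel-verified Lean document; each statement's English description precedes it below -/
import Mathlib

section
/- Let P be a pmf on a finite set T, ω : T → ℝ, Ω(λ) = -log E_P[exp(-λω(T))], and suppose ρ ≥ sup_{τ∈[0,λ]} Var_{P^τ}[ω(T)] where P^τ is the exponential tilting of P by -τω. Then for every λ ≥ 0, Ω(λ) ≥ λ E_P[ω(T)] - λ²ρ/2. -/
open Real Finset

theorem cgf_second_order_lower {T : Type*} [Fintype T] (P : T → ℝ) (hP : ∀ t, 0 ≤ P t)
    (hsum : ∑ t, P t = 1) (w : T → ℝ) (lam ρ : ℝ) (hlam : 0 ≤ lam)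
    (hρ : ∀ τ ∈ Set.Icc (0:ℝ) lam,
      (∑ t, (P t * Real.exp (-τ * w t) / ∑ s, P s * Real.exp (-τ * w s)) *
        (w t - ∑ u, (P u * Real.exp (-τ * w u) / ∑ s, P s * Real.exp (-τ * w s)) * w u) ^ 2)
        ≤ ρ) :
    -Real.log (∑ t, P t * Real.exp (-lam * w t)) ≥
      lam * (∑ t, P t * w t) - lam ^ 2 * ρ / 2 := by
  set Z : ℝ → ℝ := fun τ => ∑ t, P t * Real.exp (-τ * w t) with hZdef
  set N : ℝ → ℝ := fun τ => ∑ t, P t * w t * Real.exp (-τ * w t) with hNdef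
  set M : ℝ → ℝ := fun τ => ∑ t, P t * w t ^ 2 * Real.exp (-τ * w t) with hMdef
  -- positivity of Z
  have hex : ∃ t : T, 0 < P t := by
    by_contra h
    push_neg at h
    have : ∑ t, P t = 0 := Finset.sum_eq_zero fun t _ => le_antisymm (h t) (hP t)
    simp [this] at hsum
  have hZpos : ∀ τ, 0 < Z τ := by
    intro τ
    obtain ⟨t0, ht0⟩ := hex
    refine Finset.sum_pos' (fun t _ => mul_nonneg (hP t) (Real.exp_pos _).le) ?_
    exact ⟨t0, Finset.mem_univ t0, mul_pos ht0 (Real.exp_pos _)⟩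
  have hZne : ∀ τ, Z τ ≠ 0 := fun τ => (hZpos τ).ne'
  -- derivatives
  have hZ' : ∀ τ, HasDerivAt Z (-N τ) τ := by
    intro τ
    have h1 : HasDerivAt (fun x => ∑ t, P t * Real.exp (-x * w t))
        (∑ t, P t * (Real.exp (-τ * w t) * (-1 * w t))) τ := by
      apply HasDerivAt.fun_sum
      intro t _
      exact (((hasDerivAt_id τ).neg.mul_const (w t)).exp).const_mul (P t)
    convert h1 using 1
    rw [hNdef, ← Finset.sum_neg_distrib]
    exact Finset.sum_congr rfl fun t _ => by ring
  have hN' : ∀ τ, HasDerivAt N (-M τ) τ := by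
    intro τ
    have h1 : HasDerivAt (fun x => ∑ t, P t * w t * Real.exp (-x * w t))
        (∑ t, P t * w t * (Real.exp (-τ * w t) * (-1 * w t))) τ := by
      apply HasDerivAt.fun_sum
      intro t _
      exact (((hasDerivAt_id τ).neg.mul_const (w t)).exp).const_mul (P t * w t)
    convert h1 using 1
    rw [hMdef, ← Finset.sum_neg_distrib]
    exact Finset.sum_congr rfl fun t _ => by ring
  set c : ℝ := ∑ t, P t * w t with hcdef
  -- values at 0
  have hZ0 : Z 0 = 1 := by simp [hZdef, hsum]
  have hN0 : N 0 = c := by simp [hNdef, hcdef]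
  -- first derivative function of g
  set G : ℝ → ℝ := fun τ => N τ / Z τ - c + τ * ρ with hGdef
  have hG' : ∀ τ, HasDerivAt G ((-M τ * Z τ - N τ * -N τ) / Z τ ^ 2 + ρ) τ := by
    intro τ
    have h1 : HasDerivAt (fun x => N x / Z x) ((-M τ * Z τ - N τ * -N τ) / Z τ ^ 2) τ :=
      (hN' τ).div (hZ' τ) (hZne τ)
    have h2 : HasDerivAt (fun x : ℝ => x * ρ) ρ τ := by
      simpa using (hasDerivAt_id τ).mul_const ρ
    exact (h1.sub_const c).add h2
  -- G has nonneg derivative on [0, lam]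
  have hGderiv_nonneg : ∀ τ ∈ Set.Icc (0:ℝ) lam, 0 ≤ (-M τ * Z τ - N τ * -N τ) / Z τ ^ 2 + ρ := by
    intro τ hτ
    have hZτ : Z τ ≠ 0 := hZne τ
    have hvar := hρ τ hτ
    have hZe : (∑ s, P s * Real.exp (-τ * w s)) = Z τ := rfl
    rw [hZe] at hvar
    set μ : ℝ := ∑ u, P u * Real.exp (-τ * w u) / Z τ * w u with hμdef
    have hμ : μ = N τ / Z τ := by
      rw [hμdef, show N τ = ∑ t, P t * w t * Real.exp (-τ * w t) from rfl, Finset.sum_div]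
      exact Finset.sum_congr rfl fun t _ => by ring
    have hqsum : (∑ t, P t * Real.exp (-τ * w t) / Z τ) = 1 := by
      rw [← Finset.sum_div]
      exact div_self hZτ
    have hq2 : (∑ t, P t * Real.exp (-τ * w t) / Z τ * w t ^ 2) = M τ / Z τ := by
      rw [show M τ = ∑ t, P t * w t ^ 2 * Real.exp (-τ * w t) from rfl, Finset.sum_div]
      exact Finset.sum_congr rfl fun t _ => by ring
    have hexp : (∑ t, P t * Real.exp (-τ * w t) / Z τ * (w t - μ) ^ 2)
        = M τ / Z τ - μ ^ 2 := by
      have h : ∀ t, P t * Real.exp (-τ * w t) / Z τ * (w t - μ) ^ 2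
          = P t * Real.exp (-τ * w t) / Z τ * w t ^ 2
            - 2 * μ * (P t * Real.exp (-τ * w t) / Z τ * w t)
            + μ ^ 2 * (P t * Real.exp (-τ * w t) / Z τ) := fun t => by ring
      rw [Finset.sum_congr rfl fun t _ => h t, Finset.sum_add_distrib,
        Finset.sum_sub_distrib, ← Finset.mul_sum, ← Finset.mul_sum, hq2, hqsum]
      ring
    have hvar' : M τ / Z τ - μ ^ 2 ≤ ρ := by
      rw [← hexp]
      exact hvar
    have : (-M τ * Z τ - N τ * -N τ) / Z τ ^ 2 = -(M τ / Z τ - μ ^ 2) := by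
      rw [hμ]
      field_simp
      ring
    rw [this]
    linarith
  -- G is monotone on [0, lam]
  have hGdiff : Differentiable ℝ G := fun τ => (hG' τ).differentiableAt
  have hGmono : MonotoneOn G (Set.Icc 0 lam) := by
    apply monotoneOn_of_deriv_nonneg (convex_Icc 0 lam) hGdiff.continuous.continuousOn
      (fun τ _ => (hGdiff τ).differentiableWithinAt)
    intro τ hτ
    rw [(hG' τ).deriv]
    exact hGderiv_nonneg τ (Set.mem_of_mem_of_subset hτ
      (by rw [interior_Icc]; exact Set.Ioo_subset_Icc_self))
  have hG0 : G 0 = 0 := by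
    rw [hGdef]
    simp [hZ0, hN0]
  have hGnonneg : ∀ τ ∈ Set.Icc (0:ℝ) lam, 0 ≤ G τ := by
    intro τ hτ
    have := hGmono (Set.left_mem_Icc.mpr hlam) hτ hτ.1
    rwa [hG0] at this
  -- now g
  set g : ℝ → ℝ := fun τ => -Real.log (Z τ) - τ * c + τ ^ 2 * ρ / 2 with hgdef
  have hg' : ∀ τ, HasDerivAt g (G τ) τ := by
    intro τ
    have h1 : HasDerivAt (fun x => Real.log (Z x)) (-N τ / Z τ) τ := (hZ' τ).log (hZne τ)
    have h2 : HasDerivAt (fun x : ℝ => x * c) c τ := by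
      simpa using (hasDerivAt_id τ).mul_const c
    have h3 : HasDerivAt (fun x : ℝ => x ^ 2 * ρ / 2) (τ * ρ) τ := by
      have := ((hasDerivAt_pow 2 τ).mul_const ρ).div_const 2
      refine this.congr_deriv ?_
      ring
    have := (h1.neg.sub h2).add h3
    refine this.congr_deriv ?_
    rw [hGdef]
    simp only
    ring
  have hgdiff : Differentiable ℝ g := fun τ => (hg' τ).differentiableAt
  have hgmono : MonotoneOn g (Set.Icc 0 lam) := by
    apply monotoneOn_of_deriv_nonneg (convex_Icc 0 lam) hgdiff.continuous.continuousOn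
      (fun τ _ => (hgdiff τ).differentiableWithinAt)
    intro τ hτ
    rw [(hg' τ).deriv]
    exact hGnonneg τ (Set.mem_of_mem_of_subset hτ
      (by rw [interior_Icc]; exact Set.Ioo_subset_Icc_self))
  have hg0 : g 0 = 0 := by
    rw [hgdef]
    simp [hZ0]
  have hfinal : 0 ≤ g lam := by
    have := hgmono (Set.left_mem_Icc.mpr hlam) (Set.right_mem_Icc.mpr hlam) hlam
    rwa [hg0] at this
  rw [hgdef] at hfinal
  simp only at hfinal
  linarith
end

section
/- Let X be a finite set, P a pmf on X, and for each s in a finite set S of size M let P(·|s) be a conditional pmf on X with P(x) = Σ_s P(s)P(x|s) for some pmf on S, and let f : X → S be a deterministic map. If M ≤ exp(nR), then Σ_x P(x) 1{P(x|f(x)) ≥ exp(n(R+η)) P(x)} ≤ exp(-nη). -/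
open Real Finset
open scoped Classical

theorem rate_spectrum_bound {X S : Type*} [Fintype X] [Fintype S] (M n : ℕ)
    (hM : Fintype.card S = M) (pS : S → ℝ) (cond : S → X → ℝ) (p : X → ℝ)
    (hpS : ∀ s, 0 ≤ pS s) (hpS1 : ∑ s, pS s = 1)
    (hcond : ∀ s, (∀ x, 0 ≤ cond s x) ∧ ∑ x, cond s x = 1)
    (hmix : ∀ x, p x = ∑ s, pS s * cond s x)
    (f : X → S) (R η : ℝ) (hR : (M:ℝ) ≤ Real.exp ((n:ℝ) * R)) :
    ∑ x ∈ Finset.univ.filter (fun x => Real.exp ((n:ℝ) * (R + η)) * p x ≤ cond (f x) x), p x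
      ≤ Real.exp (-(n:ℝ) * η) := by
  set c := Real.exp ((n:ℝ) * (R + η)) with hc
  have hcpos : 0 < c := Real.exp_pos _
  have step1 : ∑ x ∈ Finset.univ.filter (fun x => c * p x ≤ cond (f x) x), p x
      ≤ c⁻¹ * ∑ x, cond (f x) x := by
    rw [Finset.mul_sum]
    refine le_trans (Finset.sum_le_sum (fun x hx => ?_))
      (Finset.sum_le_sum_of_subset_of_nonneg (Finset.filter_subset _ _)
        (fun x _ _ => mul_nonneg (le_of_lt (inv_pos.2 hcpos)) ((hcond (f x)).1 x)))
    have := (Finset.mem_filter.1 hx).2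
    rw [inv_mul_eq_div, le_div_iff₀ hcpos, mul_comm]
    exact this
  have step2 : ∑ x, cond (f x) x ≤ (M : ℝ) := by
    have : ∑ x, cond (f x) x = ∑ s, ∑ x ∈ Finset.univ.filter (fun x => f x = s), cond s x := by
      rw [← Finset.sum_fiberwise (g := f) Finset.univ (fun x => cond (f x) x)]
      exact Finset.sum_congr rfl fun s _ => Finset.sum_congr rfl fun x hx => by
        rw [(Finset.mem_filter.1 hx).2]
    rw [this, ← hM]
    calc ∑ s, ∑ x ∈ Finset.univ.filter (fun x => f x = s), cond s x
        ≤ ∑ s : S, (1 : ℝ) := Finset.sum_le_sum fun s _ => by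
          rw [← (hcond s).2]
          exact Finset.sum_le_sum_of_subset_of_nonneg (Finset.filter_subset _ _)
            (fun x _ _ => (hcond s).1 x)
      _ = (Fintype.card S : ℝ) := by simp
  calc ∑ x ∈ Finset.univ.filter (fun x => c * p x ≤ cond (f x) x), p x
      ≤ c⁻¹ * (M : ℝ) := le_trans step1 (by
        exact mul_le_mul_of_nonneg_left step2 (le_of_lt (inv_pos.2 hcpos)))
    _ ≤ c⁻¹ * Real.exp ((n:ℝ) * R) :=
        mul_le_mul_of_nonneg_left hR (le_of_lt (inv_pos.2 hcpos))
    _ = Real.exp (-(n:ℝ) * η) := by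
        rw [hc, ← Real.exp_neg, ← Real.exp_add]; ring_nf
end
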